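/- Let Σ ∈ ℝ^{2d×2d} be symmetric positive definite with block decomposition Σ = [[I, Σ_xy], [Σ_yx, Σ_yy]] into d×d blocks (i.e., Σ_xx = I), let θ*_x ∈ ℝ^d, and set S := Σ_yy − Σ_yx Σ_xy. For τ ≥ 0 define h(τ) := (τ/(1+τ)) · θ*_xᵀ Σ_xy ( Σ_yy + τI − Σ_yx Σ_xy/(1+τ) )^{-1} Σ_yx θ*_x. Then h(τ) ≥ 0 for all τ ≥ 0, and h is nondecreasing on the interval [0, √(λmin(S))]. In particular, since the deterministic equivalent of the spurious correlation satisfies C^Σ(λ) = h(τ(λ)) with τ(λ) increasing in λ, C^Σ(λ) is nonnegative and nondecreasing in λ on the set of λ where τ(λ) ≤ √(λmin(S)). -/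

import Mathlib

set_option linter.unusedSectionVars false
set_option linter.unusedVariables false
set_option maxHeartbeats 1000000

open MeasureTheory ProbabilityTheory Matrix Real

noncomputable section

/-- Squared Euclidean norm of a vector. -/
def sqNorm {m : Type*} [Fintype m] (v : m → ℝ) : ℝ := ∑ i, v i ^ 2

/-- Smallest eigenvalue of a symmetric matrix, via the Rayleigh quotient. -/
def lmin {m : Type*} [Fintype m] (A : Matrix m m ℝ) : ℝ :=
  ⨅ v : {v : m → ℝ // sqNorm v = 1}, dotProduct v.1 (A.mulVec v.1)

namespace DetSpurAux

variable {n : Type*} [Fintype n] [DecidableEq n]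

lemma star_id (x : n → ℝ) : star x = x := funext fun i => star_trivial _

lemma herm_transpose {A : Matrix n n ℝ} (h : A.IsHermitian) : Aᵀ = A := by
  rw [← Matrix.conjTranspose_eq_transpose_of_trivial]; exact h

lemma dot_symm {A : Matrix n n ℝ} (h : Aᵀ = A) (v w : n → ℝ) :
    v ⬝ᵥ A *ᵥ w = w ⬝ᵥ A *ᵥ v := by
  rw [Matrix.dotProduct_mulVec, ← Matrix.mulVec_transpose, h, dotProduct_comm]

lemma psd_quad {A : Matrix n n ℝ} (hA : A.PosSemidef) (x : n → ℝ) :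
    0 ≤ x ⬝ᵥ A *ᵥ x := by
  have := hA.dotProduct_mulVec_nonneg x; rwa [star_id] at this

lemma pd_quad {A : Matrix n n ℝ} (hA : A.PosDef) {x : n → ℝ} (hx : x ≠ 0) :
    0 < x ⬝ᵥ A *ᵥ x := by
  have := hA.dotProduct_mulVec_pos hx; rwa [star_id] at this

lemma posDef_of_quad {A : Matrix n n ℝ} (h : Aᵀ = A)
    (hq : ∀ x, x ≠ 0 → 0 < x ⬝ᵥ A *ᵥ x) : A.PosDef :=
  Matrix.posDef_iff_dotProduct_mulVec.mpr ⟨by rw [Matrix.IsHermitian, Matrix.conjTranspose_eq_transpose_of_trivial, h],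
   fun x hx => by rw [star_id]; exact hq x hx⟩

lemma psd_smul {A : Matrix n n ℝ} (hA : A.PosSemidef) {c : ℝ} (hc : 0 ≤ c) :
    (c • A).PosSemidef := by
  refine Matrix.posSemidef_iff_dotProduct_mulVec.mpr ⟨?_, fun x => ?_⟩
  · rw [Matrix.IsHermitian, Matrix.conjTranspose_smul, star_trivial, hA.1]
  · rw [star_id, Matrix.smul_mulVec, dotProduct_smul, smul_eq_mul]
    exact mul_nonneg hc (psd_quad hA x)

lemma pd_smul {A : Matrix n n ℝ} (hA : A.PosDef) {c : ℝ} (hc : 0 < c) :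
    (c • A).PosDef := by
  refine posDef_of_quad ?_ fun x hx => ?_
  · rw [Matrix.transpose_smul, herm_transpose hA.1]
  · rw [Matrix.smul_mulVec, dotProduct_smul, smul_eq_mul]
    exact mul_pos hc (pd_quad hA hx)

lemma smul_quad (c : ℝ) (A : Matrix n n ℝ) (x : n → ℝ) :
    x ⬝ᵥ (c • A) *ᵥ x = c * (x ⬝ᵥ A *ᵥ x) := by
  rw [Matrix.smul_mulVec, dotProduct_smul, smul_eq_mul]

/-- key: `2⟨x,y⟩ - yᵀAy ≤ xᵀA⁻¹x` for `A` positive definite. -/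
lemma quad_le_inv {A : Matrix n n ℝ} (hA : A.PosDef) (x y : n → ℝ) :
    2 * (x ⬝ᵥ y) - y ⬝ᵥ A *ᵥ y ≤ x ⬝ᵥ A⁻¹ *ᵥ x := by
  have hdet : IsUnit A.det := A.isUnit_iff_isUnit_det.mp hA.isUnit
  have h1 : A * A⁻¹ = 1 := Matrix.mul_nonsing_inv _ hdet
  have htA : Aᵀ = A := herm_transpose hA.1
  set c : n → ℝ := A⁻¹ *ᵥ x with hc
  have hAc : A *ᵥ c = x := by rw [hc, Matrix.mulVec_mulVec, h1, Matrix.one_mulVec]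
  have hz : 0 ≤ (y - c) ⬝ᵥ A *ᵥ (y - c) := psd_quad hA.posSemidef _
  rw [Matrix.mulVec_sub, sub_dotProduct, dotProduct_sub,
      dotProduct_sub, hAc] at hz
  have e1 : c ⬝ᵥ A *ᵥ y = y ⬝ᵥ x := by rw [dot_symm htA, hAc]
  have e3 : x ⬝ᵥ y = y ⬝ᵥ x := dotProduct_comm _ _
  rw [e1] at hz
  rw [e3, dotProduct_comm x c]
  linarith

lemma inv_quad_antitone {A B : Matrix n n ℝ} (hA : A.PosDef) (hB : B.PosDef)
    (hAB : ∀ u, u ⬝ᵥ A *ᵥ u ≤ u ⬝ᵥ B *ᵥ u) (x : n → ℝ) :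
    x ⬝ᵥ B⁻¹ *ᵥ x ≤ x ⬝ᵥ A⁻¹ *ᵥ x := by
  have hdet : IsUnit B.det := B.isUnit_iff_isUnit_det.mp hB.isUnit
  have h1 : B * B⁻¹ = 1 := Matrix.mul_nonsing_inv _ hdet
  set y : n → ℝ := B⁻¹ *ᵥ x with hy
  have hBy : B *ᵥ y = x := by rw [hy, Matrix.mulVec_mulVec, h1, Matrix.one_mulVec]
  have e1 : y ⬝ᵥ B *ᵥ y = x ⬝ᵥ B⁻¹ *ᵥ x := by rw [hBy, dotProduct_comm]
  have e2 : x ⬝ᵥ y = x ⬝ᵥ B⁻¹ *ᵥ x := rfl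
  have k := quad_le_inv hA x y
  have h2 := hAB y
  calc x ⬝ᵥ B⁻¹ *ᵥ x = 2 * (x ⬝ᵥ y) - y ⬝ᵥ B *ᵥ y := by rw [e1, e2]; ring
    _ ≤ 2 * (x ⬝ᵥ y) - y ⬝ᵥ A *ᵥ y := by linarith
    _ ≤ x ⬝ᵥ A⁻¹ *ᵥ x := k

lemma smul_inv_eq {a : ℝ} (ha : a ≠ 0) {A : Matrix n n ℝ} (hdet : IsUnit A.det) :
    (a • A)⁻¹ = a⁻¹ • A⁻¹ := by
  apply Matrix.inv_eq_right_inv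
  rw [Matrix.smul_mul, Matrix.mul_smul, smul_smul, mul_inv_cancel₀ ha,
      Matrix.mul_nonsing_inv _ hdet, one_smul]

lemma sqNorm_nonneg (v : n → ℝ) : 0 ≤ sqNorm v :=
  Finset.sum_nonneg fun i _ => sq_nonneg _

lemma sqNorm_eq_dot (v : n → ℝ) : sqNorm v = v ⬝ᵥ v := by
  simp [sqNorm, dotProduct, sq]

lemma sqNorm_smul (c : ℝ) (v : n → ℝ) : sqNorm (c • v) = c ^ 2 * sqNorm v := by
  simp [sqNorm, Finset.mul_sum, mul_pow]

lemma rayleigh_bddBelow (A : Matrix n n ℝ) :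
    BddBelow (Set.range fun v : {v : n → ℝ // sqNorm v = 1} => v.1 ⬝ᵥ A *ᵥ v.1) := by
  refine ⟨-(∑ i, ∑ j, |A i j|), ?_⟩
  rintro _ ⟨⟨v, hv⟩, rfl⟩
  have hv1 : ∀ i, |v i| ≤ 1 := by
    intro i
    have h1 : v i ^ 2 ≤ 1 := by
      rw [← hv]
      exact Finset.single_le_sum (f := fun j => v j ^ 2)
        (fun j _ => sq_nonneg _) (Finset.mem_univ i)
    nlinarith [abs_nonneg (v i), sq_abs (v i)]
  have key : ∀ i, -(∑ j, |A i j|) ≤ v i * (A *ᵥ v) i := by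
    intro i
    have hterm : ∀ j, -|A i j| ≤ v i * (A i j * v j) := by
      intro j
      have hb : |v i * (A i j * v j)| ≤ |A i j| := by
        rw [abs_mul, abs_mul]
        calc |v i| * (|A i j| * |v j|) ≤ 1 * (|A i j| * 1) := by
              apply mul_le_mul (hv1 i) _ (by positivity) zero_le_one
              exact mul_le_mul_of_nonneg_left (hv1 j) (abs_nonneg _)
          _ = |A i j| := by ring
      calc -|A i j| ≤ -|v i * (A i j * v j)| := neg_le_neg hb
        _ ≤ v i * (A i j * v j) := neg_abs_le _
    calc -(∑ j, |A i j|) = ∑ j, -|A i j| := by rw [Finset.sum_neg_distrib]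
      _ ≤ ∑ j, v i * (A i j * v j) := Finset.sum_le_sum fun j _ => hterm j
      _ = v i * (A *ᵥ v) i := by rw [Matrix.mulVec, dotProduct, Finset.mul_sum]
  calc -(∑ i, ∑ j, |A i j|) = ∑ i, -(∑ j, |A i j|) := by rw [Finset.sum_neg_distrib]
    _ ≤ ∑ i, v i * (A *ᵥ v) i := Finset.sum_le_sum fun i _ => key i
    _ = v ⬝ᵥ A *ᵥ v := rfl

lemma lmin_le_quad (A : Matrix n n ℝ) (u : n → ℝ) :
    lmin A * sqNorm u ≤ u ⬝ᵥ A *ᵥ u := by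
  by_cases hu : u = 0
  · simp [hu, sqNorm]
  · have hr : 0 < sqNorm u := by
      rcases Function.ne_iff.mp hu with ⟨i, hi⟩
      have hi' : u i ≠ 0 := by simpa using hi
      have : 0 < u i ^ 2 := pow_two_pos_of_ne_zero hi'
      exact lt_of_lt_of_le this
        (Finset.single_le_sum (f := fun j => u j ^ 2) (fun j _ => sq_nonneg _)
          (Finset.mem_univ i))
    set r := Real.sqrt (sqNorm u) with hrdef
    have hr0 : 0 < r := Real.sqrt_pos.mpr hr
    have hr2 : r ^ 2 = sqNorm u := Real.sq_sqrt (sqNorm_nonneg u)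
    have hw : sqNorm (r⁻¹ • u) = 1 := by
      rw [sqNorm_smul, ← hr2]; field_simp
    have hle : lmin A ≤ (r⁻¹ • u) ⬝ᵥ A *ᵥ (r⁻¹ • u) :=
      ciInf_le (rayleigh_bddBelow A) ⟨r⁻¹ • u, hw⟩
    have hscale : (r⁻¹ • u) ⬝ᵥ A *ᵥ (r⁻¹ • u) = (r ^ 2)⁻¹ * (u ⬝ᵥ A *ᵥ u) := by
      rw [Matrix.mulVec_smul, smul_dotProduct, dotProduct_smul]
      simp [smul_eq_mul]; ring
    rw [hscale] at hle
    rw [← hr2]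
    have hmul := mul_le_mul_of_nonneg_right hle (le_of_lt (by positivity : (0:ℝ) < r ^ 2))
    calc lmin A * r ^ 2 ≤ (r ^ 2)⁻¹ * (u ⬝ᵥ A *ᵥ u) * r ^ 2 := hmul
      _ = u ⬝ᵥ A *ᵥ u := by field_simp

lemma lmin_nonneg {A : Matrix n n ℝ} (hA : ∀ x, 0 ≤ x ⬝ᵥ A *ᵥ x) : 0 ≤ lmin A := by
  by_cases hne : Nonempty {v : n → ℝ // sqNorm v = 1}
  · exact le_ciInf fun v => hA v.1
  · have : IsEmpty {v : n → ℝ // sqNorm v = 1} := not_nonempty_iff.mp hne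
    rw [lmin, Real.iInf_of_isEmpty]

lemma scalar_key {τ₁ τ₂ p q k : ℝ} (h1 : 0 < τ₁) (h2 : 0 < τ₂) (h12 : τ₁ ≤ τ₂)
    (hp : 0 ≤ p) (hq : τ₁ * τ₂ * p ≤ q) :
    ((1+τ₂)/τ₂) * (q + τ₂*p + (τ₂*(1+τ₂)⁻¹)*k) ≤
      ((1+τ₁)/τ₁) * (q + τ₁*p + (τ₁*(1+τ₁)⁻¹)*k) := by
  have e : ∀ τ : ℝ, 0 < τ →
      ((1+τ)/τ) * (q + τ*p + (τ*(1+τ)⁻¹)*k) = ((1+τ)*q + τ*(1+τ)*p)/τ + k := by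
    intro τ hτ
    have h1τ : (1:ℝ) + τ ≠ 0 := by positivity
    field_simp
  rw [e _ h2, e _ h1, add_le_add_iff_right, div_le_div_iff₀ h2 h1]
  nlinarith [mul_nonneg (sub_nonneg.mpr h12) (sub_nonneg.mpr hq)]

end DetSpurAux

open DetSpurAux

/-- For `Σ` positive definite with `Σ_xx = I` and Schur complement
`S = Σ_yy − Σ_yx Σ_xy`, the function
`h(τ) = (τ/(1+τ)) θ*_xᵀ Σ_xy (Σ_yy + τI − Σ_yx Σ_xy/(1+τ))⁻¹ Σ_yx θ*_x`
is nonnegative on `[0, ∞)` and nondecreasing on `[0, √(λmin(S))]`. -/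
theorem deterministic_spurious_correlation_nonneg_and_monotone
    (d : ℕ) (Sxy Syx Syy : Matrix (Fin d) (Fin d) ℝ)
    (hpd : (Matrix.fromBlocks (1 : Matrix (Fin d) (Fin d) ℝ) Sxy Syx Syy).PosDef)
    (θx : Fin d → ℝ)
    (S : Matrix (Fin d) (Fin d) ℝ) (hS : S = Syy - Syx * Sxy)
    (h : ℝ → ℝ)
    (hh : ∀ τ : ℝ, h τ =
      (τ / (1 + τ)) *
        dotProduct θx
          ((Sxy * (Syy + τ • 1 - (1 + τ)⁻¹ • (Syx * Sxy))⁻¹ * Syx).mulVec θx)) :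
    (∀ τ : ℝ, 0 ≤ τ → 0 ≤ h τ) ∧
      MonotoneOn h (Set.Icc 0 (Real.sqrt (lmin S))) := by
  classical
  obtain ⟨h11, hBC, hCB, hDh⟩ := Matrix.isHermitian_fromBlocks_iff.mp hpd.1
  have htB : Sxyᵀ = Syx := by rw [← Matrix.conjTranspose_eq_transpose_of_trivial, hBC]
  have htC : Syxᵀ = Sxy := by rw [← Matrix.conjTranspose_eq_transpose_of_trivial, hCB]
  have htD : Syyᵀ = Syy := herm_transpose hDh
  have hpdB : (Matrix.fromBlocks (1 : Matrix (Fin d) (Fin d) ℝ) Sxy Sxyᴴ Syy).PosDef := by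
    rw [hBC]; exact hpd
  have hSt : Sᵀ = S := by
    rw [hS, Matrix.transpose_sub, Matrix.transpose_mul, htB, htC, htD]
  -- S is positive definite (Schur complement of a positive definite matrix)
  have hSpd : S.PosDef := by
    refine posDef_of_quad hSt fun y hy => ?_
    have hz : (Sum.elim (-(((1 : Matrix (Fin d) (Fin d) ℝ)⁻¹ * Sxy) *ᵥ y)) y) ≠ 0 := by
      intro hc; apply hy; funext i; exact congrFun hc (Sum.inr i)
    letI : Invertible (1 : Matrix (Fin d) (Fin d) ℝ) := invertibleOne
    have h0 := hpdB.dotProduct_mulVec_pos hz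
    rw [Matrix.dotProduct_mulVec,
        Matrix.schur_complement_eq₁₁ Sxy Syy _ _ Matrix.isHermitian_one,
        neg_add_cancel, star_zero, Matrix.zero_vecMul, zero_dotProduct,
        zero_add, star_id, ← Matrix.dotProduct_mulVec] at h0
    have hT : Syy - Sxyᴴ * (1 : Matrix (Fin d) (Fin d) ℝ)⁻¹ * Sxy = S := by
      rw [inv_one, Matrix.mul_one, hBC, hS]
    rwa [hT] at h0
  have hK : (Syx * Sxy).PosSemidef := by
    rw [← hBC]; exact Matrix.posSemidef_conjTranspose_mul_self Sxy
  have hone : (1 : Matrix (Fin d) (Fin d) ℝ).PosSemidef := Matrix.PosDef.one.posSemidef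
  have hMeq : ∀ τ : ℝ, 0 ≤ τ → Syy + τ • (1 : Matrix (Fin d) (Fin d) ℝ)
        - (1+τ)⁻¹ • (Syx * Sxy)
      = S + (τ • (1 : Matrix (Fin d) (Fin d) ℝ) + (τ * (1+τ)⁻¹) • (Syx * Sxy)) := by
    intro τ hτ
    have h1τ : (1:ℝ) + τ ≠ 0 := by positivity
    have hc : τ * (1+τ)⁻¹ = 1 - (1+τ)⁻¹ := by field_simp; ring
    rw [hS, hc, sub_smul, one_smul]
    abel
  have hMpd : ∀ τ : ℝ, 0 ≤ τ →
      (Syy + τ • (1 : Matrix (Fin d) (Fin d) ℝ) - (1+τ)⁻¹ • (Syx * Sxy)).PosDef := by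
    intro τ hτ
    rw [hMeq τ hτ]
    have hc2 : (0:ℝ) ≤ τ * (1+τ)⁻¹ := by positivity
    exact hSpd.add_posSemidef ((psd_smul hone hτ).add (psd_smul hK hc2))
  set v : Fin d → ℝ := Syx *ᵥ θx with hv
  have hquad : ∀ B : Matrix (Fin d) (Fin d) ℝ,
      θx ⬝ᵥ (Sxy * B * Syx) *ᵥ θx = v ⬝ᵥ B *ᵥ v := by
    intro B
    rw [← Matrix.mulVec_mulVec, ← Matrix.mulVec_mulVec, Matrix.dotProduct_mulVec,
        ← Matrix.mulVec_transpose, htB]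
  have hnn : ∀ τ : ℝ, 0 ≤ τ → 0 ≤ h τ := by
    intro τ hτ
    rw [hh τ]
    have hpdM := (hMpd τ hτ).inv
    have := hquad (Syy + τ • (1 : Matrix (Fin d) (Fin d) ℝ) - (1+τ)⁻¹ • (Syx * Sxy))⁻¹
    rw [this]
    exact mul_nonneg (div_nonneg hτ (by linarith)) (psd_quad hpdM.posSemidef v)
  refine ⟨hnn, ?_⟩
  intro τ₁ hm1 τ₂ hm2 h12
  have h10 : 0 ≤ τ₁ := hm1.1
  rcases eq_or_lt_of_le h10 with h0 | h0
  · have hτ10 : h τ₁ = 0 := by rw [hh, ← h0]; norm_num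
    rw [hτ10]; exact hnn τ₂ hm2.1
  · have h20 : 0 < τ₂ := lt_of_lt_of_le h0 h12
    have hlm : 0 ≤ lmin S := lmin_nonneg fun x => psd_quad hSpd.posSemidef x
    have hq2 : τ₂ ^ 2 ≤ lmin S := by
      have := pow_le_pow_left₀ h20.le hm2.2 2
      rwa [Real.sq_sqrt hlm] at this
    have hττ : τ₁ * τ₂ ≤ lmin S := le_trans (by nlinarith) hq2
    have hSq : ∀ u : Fin d → ℝ, τ₁ * τ₂ * sqNorm u ≤ u ⬝ᵥ S *ᵥ u := fun u =>
      le_trans (mul_le_mul_of_nonneg_right hττ (sqNorm_nonneg u)) (lmin_le_quad S u)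
    have h1p : (0:ℝ) < 1 + τ₁ := by linarith
    have h2p : (0:ℝ) < 1 + τ₂ := by linarith
    set M₁ := Syy + τ₁ • (1 : Matrix (Fin d) (Fin d) ℝ) - (1+τ₁)⁻¹ • (Syx * Sxy) with hM1
    set M₂ := Syy + τ₂ • (1 : Matrix (Fin d) (Fin d) ℝ) - (1+τ₂)⁻¹ • (Syx * Sxy) with hM2
    have hM1pd : M₁.PosDef := hMpd τ₁ h0.le
    have hM2pd : M₂.PosDef := hMpd τ₂ h20.le
    have ha₁ : (0:ℝ) < (1+τ₁)/τ₁ := by positivity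
    have ha₂ : (0:ℝ) < (1+τ₂)/τ₂ := by positivity
    have hN1pd : (((1+τ₁)/τ₁) • M₁).PosDef := pd_smul hM1pd ha₁
    have hN2pd : (((1+τ₂)/τ₂) • M₂).PosDef := pd_smul hM2pd ha₂
    have hform : ∀ τ : ℝ, 0 ≤ τ → ∀ u : Fin d → ℝ,
        u ⬝ᵥ (Syy + τ • (1 : Matrix (Fin d) (Fin d) ℝ) - (1+τ)⁻¹ • (Syx * Sxy)) *ᵥ u
          = u ⬝ᵥ S *ᵥ u + τ * sqNorm u + (τ*(1+τ)⁻¹) * (u ⬝ᵥ (Syx * Sxy) *ᵥ u) := by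
      intro τ hτ u
      rw [hMeq τ hτ, Matrix.add_mulVec, Matrix.add_mulVec, dotProduct_add,
          dotProduct_add, Matrix.smul_mulVec, Matrix.smul_mulVec,
          dotProduct_smul, dotProduct_smul, Matrix.one_mulVec, smul_eq_mul, smul_eq_mul,
          ← sqNorm_eq_dot]
      ring
    have hcomp : ∀ u, u ⬝ᵥ (((1+τ₂)/τ₂) • M₂) *ᵥ u ≤ u ⬝ᵥ (((1+τ₁)/τ₁) • M₁) *ᵥ u := by
      intro u
      rw [smul_quad, smul_quad, hM1, hM2, hform τ₁ h0.le u, hform τ₂ h20.le u]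
      exact scalar_key h0 h20 h12 (sqNorm_nonneg u) (hSq u)
    have hmain := inv_quad_antitone hN2pd hN1pd hcomp v
    have hdet1 : IsUnit M₁.det := M₁.isUnit_iff_isUnit_det.mp hM1pd.isUnit
    have hdet2 : IsUnit M₂.det := M₂.isUnit_iff_isUnit_det.mp hM2pd.isUnit
    have hN1inv : (((1+τ₁)/τ₁) • M₁)⁻¹ = (τ₁/(1+τ₁)) • M₁⁻¹ := by
      rw [smul_inv_eq ha₁.ne' hdet1, inv_div]
    have hN2inv : (((1+τ₂)/τ₂) • M₂)⁻¹ = (τ₂/(1+τ₂)) • M₂⁻¹ := by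
      rw [smul_inv_eq ha₂.ne' hdet2, inv_div]
    have hform1 : h τ₁ = v ⬝ᵥ (((1+τ₁)/τ₁) • M₁)⁻¹ *ᵥ v := by
      rw [hh, hquad M₁⁻¹, hN1inv, smul_quad]
    have hform2 : h τ₂ = v ⬝ᵥ (((1+τ₂)/τ₂) • M₂)⁻¹ *ᵥ v := by
      rw [hh, hquad M₂⁻¹, hN2inv, smul_quad]
    rw [hform1, hform2]
    exact hmain

end
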